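/- Let r and k be positive integers, and for each n ≥ 0 let W_n^{(r,k)} denote the set of weakly increasing (r,k)-parking functions of length n (with the empty sequence allowed for n = 0). Then there is a bijection ψ from k-tuples (α_1,...,α_k) of weakly increasing (r,1)-parking functions with total length n to W_n^{(r,k)}, given by: ψ(α_1,...,α_k) is the concatenation of the sequences α_i', where α_i' is obtained from α_i by adding r(ℓ(α_1)+...+ℓ(α_{i-1})) + (i-1) to each of its terms. -/

import Mathlib

/-- A list is a weakly increasing `(r,k)`-parking function: it is weakly increasing,
has positive entries, and its `i`-th entry (1-indexed) is at most `k + (i-1)r`. -/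
def IsWIPF (r k : ℕ) (l : List ℕ) : Prop :=
  l.Pairwise (· ≤ ·) ∧ ∀ i : Fin l.length, 1 ≤ l.get i ∧ l.get i ≤ k + i.val * r

/-- The map ψ: given a `k`-tuple `α` of sequences, shift every term of `α i` up by
`r(ℓ(α 1) + ⋯ + ℓ(α (i-1))) + (i-1)` and concatenate. -/
def psiMap (r k : ℕ) (α : Fin k → List ℕ) : List ℕ :=
  (List.ofFn fun i : Fin k =>
    (α i).map (fun x => x + r * (∑ j ∈ Finset.Iio i, (α j).length) + i.val)).flatten

/-- ψ is a bijection from `k`-tuples of weakly increasing `(r,1)`-parking functions of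
total length `n` onto the weakly increasing `(r,k)`-parking functions of length `n`. -/
lemma isWIPF_iff {r k : ℕ} {l : List ℕ} :
    IsWIPF r k l ↔ l.Pairwise (· ≤ ·) ∧
      ∀ p (h : p < l.length), 1 ≤ l[p] ∧ l[p] ≤ k + p * r := by
  unfold IsWIPF
  constructor
  · rintro ⟨hs, hb⟩; exact ⟨hs, fun p h => hb ⟨p, h⟩⟩
  · rintro ⟨hs, hb⟩; exact ⟨hs, fun i => hb i.1 i.2⟩

lemma Iio_succ_fin {k : ℕ} (i : Fin k) :
    Finset.Iio (Fin.succ i) = insert 0 ((Finset.Iio i).map (Fin.succEmb k)) := by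
  ext j
  simp only [Finset.mem_Iio, Finset.mem_insert, Finset.mem_map]
  constructor
  · intro h
    rcases Fin.eq_zero_or_eq_succ j with rfl | ⟨j', rfl⟩
    · exact Or.inl rfl
    · right
      exact ⟨j', Fin.succ_lt_succ_iff.mp h, rfl⟩
  · rintro (rfl | ⟨j'', hj, rfl⟩)
    · simp only [Fin.lt_def, Fin.val_succ, Fin.val_zero]
      omega
    · have h' : (j'' : ℕ) < (i : ℕ) := hj
      rw [Fin.lt_def]
      simp only [Fin.coe_succEmb, Fin.val_succ]
      omega

lemma sum_Iio_cons {k : ℕ} (a : ℕ) (f : Fin k → ℕ) (i : Fin k) :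
    ∑ j ∈ Finset.Iio (Fin.succ i), (Fin.cons a f : Fin (k+1) → ℕ) j
      = a + ∑ j ∈ Finset.Iio i, f j := by
  rw [Iio_succ_fin, Finset.sum_insert, Finset.sum_map]
  · simp [Fin.succEmb]
  · intro h
    simp only [Finset.mem_map] at h
    obtain ⟨j, _, he⟩ := h
    exact Fin.succ_ne_zero j (by simpa [Fin.succEmb] using he)

lemma psiMap_length (r k : ℕ) (α : Fin k → List ℕ) :
    (psiMap r k α).length = ∑ i, (α i).length := by
  unfold psiMap
  rw [List.length_flatten, List.map_ofFn, List.sum_ofFn]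
  simp

lemma psiMap_cons (r k : ℕ) (a : List ℕ) (β : Fin k → List ℕ) :
    psiMap r (k+1) (Fin.cons a β)
      = a ++ (psiMap r k β).map (· + (r * a.length + 1)) := by
  have hlen : ∀ j : Fin (k+1), ((Fin.cons a β : Fin (k+1) → List ℕ) j).length
      = (Fin.cons a.length (fun j => (β j).length) : Fin (k+1) → ℕ) j := by
    intro j
    induction j using Fin.cases <;> simp
  have h0 : Finset.Iio (0 : Fin (k+1)) = ∅ := by
    ext j; simp
  unfold psiMap
  rw [List.ofFn_succ, List.flatten_cons]
  rw [List.map_flatten, List.map_ofFn]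
  congr 1
  · simp [h0]
  · refine congrArg List.flatten (congrArg List.ofFn (funext fun i => ?_))
    simp only [Function.comp, Fin.cons_succ, List.map_map]
    apply List.map_congr_left
    intro x _
    simp only [Function.comp_apply, Fin.val_succ]
    have hs : ∑ j ∈ Finset.Iio (Fin.succ i), ((Fin.cons a β : Fin (k+1) → List ℕ) j).length
        = a.length + ∑ j ∈ Finset.Iio i, (β j).length := by
      simp only [hlen]
      exact sum_Iio_cons a.length (fun j => (β j).length) i
    rw [hs]
    ring

lemma isWIPF_one_le {r k : ℕ} {l : List ℕ} (h : IsWIPF r k l) {v : ℕ} (hv : v ∈ l) :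
    1 ≤ v := by
  obtain ⟨p, hp, rfl⟩ := List.mem_iff_getElem.mp hv
  exact ((isWIPF_iff.mp h).2 p hp).1

lemma isWIPF_le_of_mem {r k : ℕ} {l : List ℕ} (h : IsWIPF r k l) {v : ℕ} (hv : v ∈ l)
    (hl : 0 < l.length) : v ≤ k + (l.length - 1) * r := by
  obtain ⟨p, hp, rfl⟩ := List.mem_iff_getElem.mp hv
  have h1 := ((isWIPF_iff.mp h).2 p hp).2
  have h2 : p * r ≤ (l.length - 1) * r := Nat.mul_le_mul_right r (by omega)
  omega

lemma isWIPF_append {r k : ℕ} {a w : List ℕ} (ha : IsWIPF r 1 a) (hw : IsWIPF r k w) :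
    IsWIPF r (k+1) (a ++ w.map (· + (r * a.length + 1))) := by
  rw [isWIPF_iff]
  obtain ⟨has, hab⟩ := isWIPF_iff.mp ha
  obtain ⟨hws, hwb⟩ := isWIPF_iff.mp hw
  constructor
  · rw [List.pairwise_append]
    refine ⟨has, ?_, ?_⟩
    · show List.Pairwise (· ≤ ·) (w.map (· + (r * a.length + 1)))
      exact List.Pairwise.map _ (fun x y hxy => Nat.add_le_add_right hxy _) hws
    · intro x hx y hy
      obtain ⟨z, hz, rfl⟩ := List.mem_map.mp hy
      have h1 : x ≤ 1 + (a.length - 1) * r :=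
        isWIPF_le_of_mem ha hx (List.length_pos_iff.mpr (List.ne_nil_of_mem hx))
      have h2 : 1 ≤ z := isWIPF_one_le hw hz
      have h3 : (a.length - 1) * r ≤ a.length * r :=
        Nat.mul_le_mul_right r (Nat.sub_le _ _)
      have h4 : r * a.length = a.length * r := mul_comm _ _
      omega
  · intro p hp
    rw [List.length_append, List.length_map] at hp
    by_cases hcase : p < a.length
    · rw [List.getElem_append_left hcase]
      have := hab p hcase
      omega
    · push_neg at hcase
      rw [List.getElem_append_right hcase, List.getElem_map]
      have hq : p - a.length < w.length := by omega
      have h1 := hwb (p - a.length) hq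
      have h4 : r * a.length = a.length * r := mul_comm _ _
      have h5 : p * r = a.length * r + (p - a.length) * r := by
        rw [← Nat.add_mul, Nat.add_sub_cancel' hcase]
      omega

lemma len_ge {r : ℕ} {a a' x x' : List ℕ} (ha' : IsWIPF r 1 a')
    (hx : ∀ v ∈ x, r * a.length + 2 ≤ v) (h : a ++ x = a' ++ x') :
    a'.length ≤ a.length := by
  by_contra hlt
  push_neg at hlt
  have hlen : a.length + x.length = a'.length + x'.length := by
    have := congrArg List.length h
    simpa using this
  have hm : a.length < (a ++ x).length := by
    rw [List.length_append]; omega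
  have h1 : (a ++ x)[a.length] = x[0]'(by omega) := by
    rw [List.getElem_append_right (le_refl _)]
    simp
  have h2 : (a' ++ x')[a.length]'(by rw [List.length_append]; omega) = a'[a.length] := by
    rw [List.getElem_append_left hlt]
  have h3 : (a ++ x)[a.length] = (a' ++ x')[a.length]'(by rw [List.length_append]; omega) :=
    List.getElem_of_eq h _
  have h4 := hx _ (List.getElem_mem (l := x) (n := 0) (by omega))
  have h5 := ((isWIPF_iff.mp ha').2 a.length hlt).2
  have h6 : r * a.length = a.length * r := mul_comm _ _
  omega

lemma split_exists {r k : ℕ} {l : List ℕ} (hl : IsWIPF r (k+1) l) :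
    ∃ a w : List ℕ, IsWIPF r 1 a ∧ IsWIPF r k w ∧
      l = a ++ w.map (· + (r * a.length + 1)) ∧ a.length + w.length = l.length := by
  obtain ⟨hs, hb⟩ := isWIPF_iff.mp hl
  have hPex : ∃ p, ¬(p < l.length ∧ l.getD p 0 ≤ 1 + r * p) := ⟨l.length, by simp⟩
  classical
  set m := Nat.find hPex with hmdef
  have hmle : m ≤ l.length := Nat.find_le (by simp)
  have hlt : ∀ p, p < m → p < l.length ∧ l.getD p 0 ≤ 1 + r * p := by
    intro p hp
    have := Nat.find_min hPex hp
    exact not_not.mp this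
  have hspec := Nat.find_spec hPex
  -- getD to getElem
  have hgetD : ∀ p (h : p < l.length), l.getD p 0 = l[p] := fun p h =>
    List.getD_eq_getElem l 0 h
  -- sorted monotone on indices
  have hmono : ∀ p q (hpq : p ≤ q) (hq : q < l.length), l[p]'(by omega) ≤ l[q] := by
    intro p q hpq hq
    rcases Nat.eq_or_lt_of_le hpq with rfl | hpq'
    · exact le_refl _
    · exact List.pairwise_iff_getElem.mp hs p q (by omega) hq hpq'
  -- lower bound on entries of the drop
  have hdropLB : ∀ q, m ≤ q → (hq : q < l.length) → r * m + 2 ≤ l[q] := by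
    intro q hmq hq
    have hmlt : m < l.length := lt_of_le_of_lt hmq hq
    have h1 : ¬ (l.getD m 0 ≤ 1 + r * m) := by
      intro hcon
      exact hspec ⟨hmlt, hcon⟩
    rw [hgetD m hmlt] at h1
    have h2 := hmono m q hmq hq
    omega
  refine ⟨l.take m, (l.drop m).map (fun x => x - (r * m + 1)), ?_, ?_, ?_, ?_⟩
  · rw [isWIPF_iff]
    constructor
    · exact List.Pairwise.sublist (List.take_sublist m l) hs
    · intro p hp
      rw [List.length_take] at hp
      have hpm : p < m := lt_of_lt_of_le hp (min_le_left _ _)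
      have hpl : p < l.length := lt_of_lt_of_le hp (min_le_right _ _)
      have h1 := (hlt p hpm).2
      rw [hgetD p hpl] at h1
      have h2 := (hb p hpl).1
      rw [List.getElem_take]
      have h3 : r * p = p * r := mul_comm _ _
      omega
  · rw [isWIPF_iff]
    constructor
    · refine List.Pairwise.map _ (fun x y hxy => Nat.sub_le_sub_right hxy _) ?_
      exact List.Pairwise.sublist (List.drop_sublist m l) hs
    · intro t ht
      rw [List.length_map, List.length_drop] at ht
      have hq : m + t < l.length := by omega
      rw [List.getElem_map, List.getElem_drop]
      have h1 := hdropLB (m + t) (by omega) hq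
      have h2 := (hb (m + t) hq).2
      have h3 : (m + t) * r = m * r + t * r := Nat.add_mul _ _ _
      have h4 : r * m = m * r := mul_comm _ _
      omega
  · have hlen : (l.take m).length = m := by
      rw [List.length_take]; omega
    rw [hlen]
    have : ((l.drop m).map (fun x => x - (r * m + 1))).map (· + (r * m + 1)) = l.drop m := by
      rw [List.map_map]
      have : ∀ x ∈ l.drop m, x - (r * m + 1) + (r * m + 1) = x := by
        intro x hx
        obtain ⟨t, ht, rfl⟩ := List.mem_iff_getElem.mp hx
        rw [List.length_drop] at ht
        rw [List.getElem_drop]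
        have := hdropLB (m + t) (by omega) (by omega)
        omega
      calc (l.drop m).map ((· + (r * m + 1)) ∘ (fun x => x - (r * m + 1)))
          = (l.drop m).map id := List.map_congr_left (fun x hx => this x hx)
        _ = l.drop m := List.map_id _
    rw [this, List.take_append_drop]
  · rw [List.length_take, List.length_map, List.length_drop]; omega

lemma main_bij (r : ℕ) : ∀ (k n : ℕ), Set.BijOn (psiMap r k)
    {α : Fin k → List ℕ | (∀ i, IsWIPF r 1 (α i)) ∧ ∑ i, (α i).length = n}
    {l : List ℕ | IsWIPF r k l ∧ l.length = n} := by
  intro k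
  induction k with
  | zero =>
    intro n
    have hψ : ∀ α : Fin 0 → List ℕ, psiMap r 0 α = [] := by
      intro α; simp [psiMap]
    refine ⟨?_, ?_, ?_⟩
    · rintro α ⟨-, hsum⟩
      refine ⟨?_, ?_⟩
      · rw [hψ]
        exact ⟨List.Pairwise.nil, fun i => i.elim0⟩
      · rw [hψ]
        simp only [List.length_nil]
        simpa using hsum
    · intro α _ α' _ _
      funext i; exact i.elim0
    · rintro l ⟨⟨hs, hbd⟩, hlen⟩
      have hl0 : l = [] := by
        cases l with
        | nil => rfl
        | cons x t =>
          have := hbd ⟨0, by simp⟩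
          simp at this
          omega
      subst hl0
      exact ⟨fun i => i.elim0, ⟨fun i => i.elim0, by simpa using hlen⟩, hψ _⟩
  | succ k IH =>
    intro n
    refine ⟨?_, ?_, ?_⟩
    · rintro α ⟨hα, hsum⟩
      rw [Set.mem_setOf_eq, ← Fin.cons_self_tail α, psiMap_cons]
      have hmem : Fin.tail α ∈ {β : Fin k → List ℕ |
          (∀ i, IsWIPF r 1 (β i)) ∧ ∑ i, (β i).length = ∑ i, (Fin.tail α i).length} :=
        ⟨fun i => hα i.succ, rfl⟩
      obtain ⟨hw, hwlen⟩ := (IH (∑ i, (Fin.tail α i).length)).mapsTo hmem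
      refine ⟨isWIPF_append (hα 0) hw, ?_⟩
      rw [List.length_append, List.length_map, hwlen]
      rw [Fin.sum_univ_succ] at hsum
      exact hsum
    · rintro α ⟨hα, hsα⟩ α' ⟨hα', hsα'⟩ heq
      rw [← Fin.cons_self_tail α, ← Fin.cons_self_tail α', psiMap_cons, psiMap_cons] at heq
      have hmem : Fin.tail α ∈ {β : Fin k → List ℕ |
          (∀ i, IsWIPF r 1 (β i)) ∧ ∑ i, (β i).length = ∑ i, (Fin.tail α i).length} :=
        ⟨fun i => hα i.succ, rfl⟩
      have hmem' : Fin.tail α' ∈ {β : Fin k → List ℕ |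
          (∀ i, IsWIPF r 1 (β i)) ∧ ∑ i, (β i).length = ∑ i, (Fin.tail α' i).length} :=
        ⟨fun i => hα' i.succ, rfl⟩
      obtain ⟨hw, hwlen⟩ := (IH (∑ i, (Fin.tail α i).length)).mapsTo hmem
      obtain ⟨hw', hwlen'⟩ := (IH (∑ i, (Fin.tail α' i).length)).mapsTo hmem'
      have hxbound : ∀ v ∈ (psiMap r k (Fin.tail α)).map (· + (r * (α 0).length + 1)),
          r * (α 0).length + 2 ≤ v := by
        intro v hv
        obtain ⟨z, hz, rfl⟩ := List.mem_map.mp hv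
        have := isWIPF_one_le hw hz
        omega
      have hxbound' : ∀ v ∈ (psiMap r k (Fin.tail α')).map (· + (r * (α' 0).length + 1)),
          r * (α' 0).length + 2 ≤ v := by
        intro v hv
        obtain ⟨z, hz, rfl⟩ := List.mem_map.mp hv
        have := isWIPF_one_le hw' hz
        omega
      have hlen01 : (α 0).length = (α' 0).length :=
        le_antisymm (len_ge (hα 0) hxbound' heq.symm) (len_ge (hα' 0) hxbound heq)
      obtain ⟨hhead, htail⟩ := List.append_inj heq hlen01
      have htail2 : psiMap r k (Fin.tail α) = psiMap r k (Fin.tail α') := by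
        rw [hlen01] at htail
        have hinj : Function.Injective (· + (r * (α' 0).length + 1)) := fun x y h => by
          simpa using h
        exact List.map_injective_iff.mpr hinj htail
      have hTeq : Fin.tail α = Fin.tail α' := by
        refine (IH (∑ i, (Fin.tail α i).length)).injOn
          ⟨fun i => hα i.succ, rfl⟩ ⟨fun i => hα' i.succ, ?_⟩ htail2
        rw [← psiMap_length r k (Fin.tail α'), ← htail2, psiMap_length]
      rw [← Fin.cons_self_tail α, ← Fin.cons_self_tail α', hhead, hTeq]
    · rintro l ⟨hl, hlen⟩
      obtain ⟨a, w, ha, hw, hsplit, hlensum⟩ := split_exists hl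
      have hwmem : w ∈ {l : List ℕ | IsWIPF r k l ∧ l.length = w.length} := ⟨hw, rfl⟩
      obtain ⟨β, hβmem, hψ⟩ := (IH w.length).surjOn hwmem
      obtain ⟨hβ, hβsum⟩ := hβmem
      refine ⟨Fin.cons a β, ⟨?_, ?_⟩, ?_⟩
      · intro i
        exact Fin.cases ha hβ i
      · rw [Fin.sum_univ_succ]
        simp only [Fin.cons_zero, Fin.cons_succ]
        rw [hβsum]
        omega
      · rw [psiMap_cons, hψ]
        exact hsplit.symm

theorem stmt6 (r k n : ℕ) (hr : 0 < r) (hk : 0 < k) :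
    Set.BijOn (psiMap r k)
      {α : Fin k → List ℕ | (∀ i, IsWIPF r 1 (α i)) ∧ ∑ i, (α i).length = n}
      {l : List ℕ | IsWIPF r k l ∧ l.length = n} :=
  main_bij r k n
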